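/- Let n ≥ 1 and let γₙ : [a, b] → ℝ × ℝⁿ (a < b) be future-directed causal curves converging pointwise on [a, b] to a map γ : [a, b] → ℝ × ℝⁿ. Then every increment γ(t₂) − γ(t₁) (t₁ < t₂) of γ lies in the closed future causal cone C, so the Lorentzian length L(γ) is defined, and limsup_{n→∞} L(γₙ) ≤ L(γ). (This is the Minkowski-space instance of Theorem 2.4(a) of the paper: upper semicontinuity of the Lorentzian length functional.) -/

import Mathlib

open Filter Set
open scoped BigOperators ENNReal

noncomputable section

/-- Minkowski space modeled as `ℝ × ℝⁿ` with the Euclidean norm,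
i.e. `EuclideanSpace ℝ (Fin (n+1))` with time component `x 0`. -/
abbrev Mink (n : ℕ) : Type := EuclideanSpace ℝ (Fin (n + 1))

/-- The closed future causal cone `C = {x : x⁰ ≥ ‖x̄‖}`. -/
def causalCone (n : ℕ) : Set (Mink n) :=
  {x | Real.sqrt (∑ i : Fin n, x i.succ ^ 2) ≤ x 0}

/-- The Lorentzian quadratic form `q(x) = (x⁰)² − ‖x̄‖²`. -/
def qform (n : ℕ) (x : Mink n) : ℝ :=
  x 0 ^ 2 - ∑ i : Fin n, x i.succ ^ 2

/-- `γ` is a future-directed causal curve on the set `s`. -/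
def FDCausal (n : ℕ) (γ : ℝ → Mink n) (s : Set ℝ) : Prop :=
  ∀ ⦃t₁⦄, t₁ ∈ s → ∀ ⦃t₂⦄, t₂ ∈ s → t₁ < t₂ →
    γ t₂ - γ t₁ ∈ causalCone n ∧ γ t₂ ≠ γ t₁

/-- The Lorentzian length of `γ` on `[a, b]`: the infimum over finite partitions
`a = t₀ < t₁ < ⋯ < t_m = b` of `Σᵢ √(q(γ(tᵢ₊₁) − γ(tᵢ)))`. -/
def LLength (n : ℕ) (γ : ℝ → Mink n) (a b : ℝ) : ℝ :=
  sInf { L : ℝ | ∃ (m : ℕ) (t : Fin (m + 1) → ℝ), StrictMono t ∧ t 0 = a ∧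
    t (Fin.last m) = b ∧
    L = ∑ i : Fin m, Real.sqrt (qform n (γ (t i.succ) - γ (t i.castSucc))) }


lemma continuous_qform (n : ℕ) : Continuous (qform n) := by
  unfold qform
  exact ((EuclideanSpace.proj (0 : Fin (n+1))).continuous.pow 2).sub
    (continuous_finset_sum _ fun i _ =>
      ((EuclideanSpace.proj (Fin.succ i)).continuous.pow 2))

lemma mem_lengthSet (n : ℕ) (γ : ℝ → Mink n) (a b : ℝ) (hab : a < b) :
    Real.sqrt (qform n (γ b - γ a)) ∈
      { L : ℝ | ∃ (m : ℕ) (t : Fin (m + 1) → ℝ), StrictMono t ∧ t 0 = a ∧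
        t (Fin.last m) = b ∧
        L = ∑ i : Fin m, Real.sqrt (qform n (γ (t i.succ) - γ (t i.castSucc))) } := by
  refine ⟨1, fun i => a + (i : ℝ) * (b - a), ?_, by simp, ?_, ?_⟩
  · intro i j hij
    have h : (i : ℝ) < (j : ℝ) := by exact_mod_cast hij
    exact add_lt_add_right (mul_lt_mul_of_pos_right h (sub_pos.mpr hab)) a
  · simp [Fin.last]
  · simp [Fin.sum_univ_one]

lemma bddBelow_lengthSet (n : ℕ) (γ : ℝ → Mink n) (a b : ℝ) :
    BddBelow { L : ℝ | ∃ (m : ℕ) (t : Fin (m + 1) → ℝ), StrictMono t ∧ t 0 = a ∧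
        t (Fin.last m) = b ∧
        L = ∑ i : Fin m, Real.sqrt (qform n (γ (t i.succ) - γ (t i.castSucc))) } := by
  refine ⟨0, ?_⟩
  rintro L ⟨m, t, -, -, -, rfl⟩
  exact Finset.sum_nonneg fun i _ => Real.sqrt_nonneg _

/-- Upper semicontinuity of the Lorentzian length functional: if future-directed causal
curves `γₙ : [a,b] → ℝ × ℝⁿ` converge pointwise to `γ`, then all increments of `γ`
lie in the causal cone and `limsup L(γₙ) ≤ L(γ)`. -/
theorem length_upper_semicontinuous (n : ℕ) (hn : 1 ≤ n) (a b : ℝ) (hab : a < b)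
    (γseq : ℕ → ℝ → Mink n) (γ : ℝ → Mink n)
    (hcausal : ∀ m, FDCausal n (γseq m) (Set.Icc a b))
    (hconv : ∀ t ∈ Set.Icc a b,
      Filter.Tendsto (fun m => γseq m t) Filter.atTop (nhds (γ t))) :
    (∀ ⦃t₁⦄, t₁ ∈ Set.Icc a b → ∀ ⦃t₂⦄, t₂ ∈ Set.Icc a b → t₁ < t₂ →
      γ t₂ - γ t₁ ∈ causalCone n) ∧
    Filter.limsup (fun m => LLength n (γseq m) a b) Filter.atTop ≤ LLength n γ a b := by
  have hC : IsClosed (causalCone n) := by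
    have h1 : Continuous fun x : Mink n => Real.sqrt (∑ i : Fin n, x i.succ ^ 2) :=
      Real.continuous_sqrt.comp (continuous_finset_sum _ fun i _ =>
        (EuclideanSpace.proj (Fin.succ i)).continuous.pow 2)
    exact isClosed_le h1 (EuclideanSpace.proj (0 : Fin (n+1))).continuous
  constructor
  · intro t₁ h₁ t₂ h₂ hlt
    have htend : Tendsto (fun m => γseq m t₂ - γseq m t₁) atTop (nhds (γ t₂ - γ t₁)) :=
      (hconv t₂ h₂).sub (hconv t₁ h₁)
    exact hC.mem_of_tendsto htend
      (Filter.Eventually.of_forall fun m => (hcausal m h₁ h₂ hlt).1)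
  · refine le_csInf ⟨_, mem_lengthSet n γ a b hab⟩ ?_
    rintro L ⟨m, t, hmono, h0, hlast, rfl⟩
    have hmem : ∀ i : Fin (m+1), t i ∈ Set.Icc a b := fun i =>
      ⟨h0 ▸ hmono.monotone (Fin.zero_le i), hlast ▸ hmono.monotone (Fin.le_last i)⟩
    set g : ℕ → ℝ := fun k =>
      ∑ i : Fin m, Real.sqrt (qform n (γseq k (t i.succ) - γseq k (t i.castSucc))) with hgdef
    have hg : Tendsto g atTop
        (nhds (∑ i : Fin m, Real.sqrt (qform n (γ (t i.succ) - γ (t i.castSucc))))) := by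
      apply tendsto_finset_sum
      intro i _
      exact ((Real.continuous_sqrt.comp (continuous_qform n)).continuousAt).tendsto.comp
        ((hconv _ (hmem i.succ)).sub (hconv _ (hmem i.castSucc)))
    have hfg : ∀ k, LLength n (γseq k) a b ≤ g k := fun k =>
      csInf_le (bddBelow_lengthSet n (γseq k) a b) ⟨m, t, hmono, h0, hlast, rfl⟩
    have hf0 : ∀ k, (0:ℝ) ≤ LLength n (γseq k) a b := by
      intro k
      refine le_csInf ⟨_, mem_lengthSet n (γseq k) a b hab⟩ ?_
      rintro L ⟨m', t', -, -, -, rfl⟩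
      exact Finset.sum_nonneg fun i _ => Real.sqrt_nonneg _
    have hcb : Filter.IsCoboundedUnder (· ≤ ·) Filter.atTop
        (fun k => LLength n (γseq k) a b) :=
      Filter.IsBoundedUnder.isCoboundedUnder_le ⟨0, Filter.eventually_map.2 (Filter.Eventually.of_forall hf0)⟩
    calc Filter.limsup (fun k => LLength n (γseq k) a b) Filter.atTop
        ≤ Filter.limsup g Filter.atTop :=
          Filter.limsup_le_limsup (Filter.Eventually.of_forall hfg) hcb
            hg.isBoundedUnder_le
      _ = _ := hg.limsup_eq
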